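/- Let u : ℝ^d → ℝ be convex and everywhere differentiable, let t > 0, and suppose the section D_{x₀}u(t) has finite diameter Λ. Let x₁ ∈ ℝ^d satisfy 2Λ·|∇u(x₁) - ∇u(x₀)| < t and |x₀ - x₁| ≤ Λ. Then D_{x₀}u(t - 2Λ·|∇u(x₁) - ∇u(x₀)|) ⊆ D_{x₁}u(t). -/

import Mathlib

open MeasureTheory Filter Metric Set

noncomputable section

abbrev Ed (d : ℕ) := EuclideanSpace ℝ (Fin d)

/-- The section `D_x u(t) = {y : u(y) - u(x) - (y-x)·∇u(x) ≤ t}`. -/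
def Dsec (d : ℕ) (u : Ed d → ℝ) (x : Ed d) (t : ℝ) : Set (Ed d) :=
  {y | u y - u x - (inner ℝ (gradient u x) (y - x) : ℝ) ≤ t}

lemma grad_support (d : ℕ) (u : Ed d → ℝ)
    (hconv : ConvexOn ℝ Set.univ u) (hdiff : Differentiable ℝ u)
    (x y : Ed d) : (inner ℝ (gradient u x) (y - x) : ℝ) ≤ u y - u x := by
  have hline : HasDerivAt (fun s : ℝ => x + s • (y - x)) (y - x) 0 := by
    simpa using ((hasDerivAt_id (0 : ℝ)).smul_const (y - x)).const_add x
  have hpt : x + (0 : ℝ) • (y - x) = x := by simp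
  have hgrad : HasFDerivAt u ((InnerProductSpace.toDual ℝ (Ed d)) (gradient u x))
      (x + (0 : ℝ) • (y - x)) := by
    rw [hpt]
    exact hasGradientAt_iff_hasFDerivAt.mp (hdiff x).hasGradientAt
  have hg : HasDerivAt (fun s : ℝ => u (x + s • (y - x)))
      ((inner ℝ (gradient u x) (y - x) : ℝ)) 0 := by
    have := hgrad.comp_hasDerivAt 0 hline
    rw [InnerProductSpace.toDual_apply_apply] at this
    exact this
  have hgc : ConvexOn ℝ Set.univ (fun s : ℝ => u (x + s • (y - x))) := by
    have := hconv.comp_affineMap (AffineMap.lineMap x y)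
    have he : (u ∘ (AffineMap.lineMap x y)) = fun s : ℝ => u (x + s • (y - x)) := by
      funext s
      simp only [Function.comp_apply, AffineMap.lineMap_apply_module]
      congr 1
      module
    rw [he] at this
    simpa using this
  have hs := hgc.le_slope_of_hasDerivAt (Set.mem_univ 0) (Set.mem_univ (1 : ℝ))
    zero_lt_one hg
  simpa [slope_def_field] using hs

/-- Inclusion of sections at nearby points: if `D_{x₀}u(t)` has finite diameter `Λ`,
`2Λ|∇u(x₁)-∇u(x₀)| < t` and `|x₀-x₁| ≤ Λ`, then
`D_{x₀}u(t - 2Λ|∇u(x₁)-∇u(x₀)|) ⊆ D_{x₁}u(t)`. -/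
theorem stmt10 (d : ℕ) (hd : 1 ≤ d) (u : Ed d → ℝ)
    (hconv : ConvexOn ℝ Set.univ u) (hdiff : Differentiable ℝ u)
    (x₀ x₁ : Ed d) (t : ℝ) (ht : 0 < t)
    (hbdd : Bornology.IsBounded (Dsec d u x₀ t))
    (h1 : 2 * Metric.diam (Dsec d u x₀ t) * ‖gradient u x₁ - gradient u x₀‖ < t)
    (h2 : dist x₀ x₁ ≤ Metric.diam (Dsec d u x₀ t)) :
    Dsec d u x₀ (t - 2 * Metric.diam (Dsec d u x₀ t) * ‖gradient u x₁ - gradient u x₀‖)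
      ⊆ Dsec d u x₁ t := by
  intro y hy
  set Λ := Metric.diam (Dsec d u x₀ t) with hΛ
  set δ := ‖gradient u x₁ - gradient u x₀‖ with hδ
  have hΛ0 : 0 ≤ Λ := Metric.diam_nonneg
  have hδ0 : 0 ≤ δ := norm_nonneg _
  have hy' : u y - u x₀ - (inner ℝ (gradient u x₀) (y - x₀) : ℝ) ≤ t - 2 * Λ * δ := hy
  have hyt : y ∈ Dsec d u x₀ t := by
    have : t - 2 * Λ * δ ≤ t := by nlinarith
    exact le_trans hy' this
  have hx₀t : x₀ ∈ Dsec d u x₀ t := by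
    simp only [Dsec, Set.mem_setOf_eq, sub_self, inner_zero_right]
    linarith
  have hdy : dist y x₀ ≤ Λ := Metric.dist_le_diam_of_mem hbdd hyt hx₀t
  have hny : ‖y - x₁‖ ≤ 2 * Λ := by
    calc ‖y - x₁‖ = dist y x₁ := (dist_eq_norm y x₁).symm
      _ ≤ dist y x₀ + dist x₀ x₁ := dist_triangle y x₀ x₁
      _ ≤ Λ + Λ := add_le_add hdy h2
      _ = 2 * Λ := by ring
  have hsupp : (inner ℝ (gradient u x₀) (x₁ - x₀) : ℝ) ≤ u x₁ - u x₀ :=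
    grad_support d u hconv hdiff x₀ x₁
  have hinner : |(inner ℝ (gradient u x₁ - gradient u x₀) (y - x₁) : ℝ)| ≤ δ * (2 * Λ) := by
    calc |(inner ℝ (gradient u x₁ - gradient u x₀) (y - x₁) : ℝ)|
        ≤ ‖gradient u x₁ - gradient u x₀‖ * ‖y - x₁‖ := abs_real_inner_le_norm _ _
      _ ≤ δ * (2 * Λ) := by
          apply mul_le_mul le_rfl hny (norm_nonneg _) hδ0
  have hsplit : u y - u x₁ - (inner ℝ (gradient u x₁) (y - x₁) : ℝ)
      = (u y - u x₀ - (inner ℝ (gradient u x₀) (y - x₀) : ℝ))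
        - (u x₁ - u x₀ - (inner ℝ (gradient u x₀) (x₁ - x₀) : ℝ))
        - (inner ℝ (gradient u x₁ - gradient u x₀) (y - x₁) : ℝ) := by
    have e1 : (inner ℝ (gradient u x₁ - gradient u x₀) (y - x₁) : ℝ)
        = (inner ℝ (gradient u x₁) (y - x₁) : ℝ) - (inner ℝ (gradient u x₀) (y - x₁) : ℝ) :=
      inner_sub_left _ _ _
    have e2 : (inner ℝ (gradient u x₀) (y - x₀) : ℝ)
        = (inner ℝ (gradient u x₀) (y - x₁) : ℝ) + (inner ℝ (gradient u x₀) (x₁ - x₀) : ℝ) := by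
      rw [← inner_add_right]
      congr 1
      abel
    rw [e1, e2]; ring
  have habs : (inner ℝ (gradient u x₁ - gradient u x₀) (y - x₁) : ℝ) ≥ -(δ * (2 * Λ)) :=
    neg_le_of_abs_le hinner
  show u y - u x₁ - (inner ℝ (gradient u x₁) (y - x₁) : ℝ) ≤ t
  rw [hsplit]
  linarith
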